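/- arXiv:1709.04764 — 5 statements merged into one kernel-verified Lean document; each statement's English description precedes it below -/
import Mathlib

section
/- If x is a feasible flow (A_u x = b_s) and y is a nonzero flow with A y = 0 (a circulation) such that for every edge e, y_e ≠ 0 implies x_e and y_e have the same sign and |y_e| ≤ |x_e|, then x - y is feasible and F(x - y) < F(x), where F(x) = (1/2) Σ_e d_e (x_e² + λ|x_e|) with d_e > 0. (This is the key lemma for removing cycles from optimal flows.) -/
open Matrix

lemma aux_pt (a b : ℝ) (hab : 0 < a * b) (hle : |b| ≤ |a|) :
    (a - b) ^ 2 < a ^ 2 ∧ |a - b| ≤ |a| := by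
  have h1 : b ^ 2 ≤ a * b := by
    rcases lt_or_ge 0 b with hb | hb
    · have ha : 0 < a := by
        rcases mul_pos_iff.mp hab with h | h
        · exact h.1
        · linarith [h.2]
      rw [abs_of_pos hb, abs_of_pos ha] at hle
      nlinarith
    · have hb' : b < 0 := lt_of_le_of_ne hb (fun h => by simp [h] at hab)
      have ha : a < 0 := by nlinarith
      rw [abs_of_neg hb', abs_of_neg ha] at hle
      nlinarith
  have hsq : (a - b) ^ 2 < a ^ 2 := by nlinarith
  refine ⟨hsq, ?_⟩
  have := (pow_le_pow_iff_left₀ (abs_nonneg (a-b)) (abs_nonneg a) two_ne_zero).mp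
    (by rw [sq_abs, sq_abs]; linarith)
  exact this

/-- Subtracting a nonzero circulation `y` that agrees in sign with
a feasible flow `x` and satisfies `|yₑ| ≤ |xₑ|` componentwise yields a feasible
flow of strictly smaller objective value. -/
theorem stmt_4 (nl nu m : ℕ)
    (A : Matrix (Fin nl ⊕ Fin nu) (Fin m) ℝ)
    (d : Fin m → ℝ) (hd : ∀ e, 0 < d e)
    (lam : ℝ) (hlam : 0 ≤ lam)
    (F : (Fin m → ℝ) → ℝ)
    (hF : F = fun x => (1 / 2) * ∑ e, d e * ((x e) ^ 2 + lam * |x e|))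
    (b : Fin nu → ℝ) (x y : Fin m → ℝ)
    (hx : A.submatrix Sum.inr id *ᵥ x = b)
    (hy0 : y ≠ 0) (hcirc : A *ᵥ y = 0)
    (hsign : ∀ e, y e ≠ 0 → 0 < x e * y e ∧ |y e| ≤ |x e|) :
    A.submatrix Sum.inr id *ᵥ (x - y) = b ∧ F (x - y) < F x := by
  constructor
  · have hyu : A.submatrix Sum.inr id *ᵥ y = 0 := by
      funext i
      have := congrFun hcirc (Sum.inr i)
      simpa [Matrix.mulVec, Matrix.submatrix, dotProduct] using this
    rw [Matrix.mulVec_sub, hx, hyu, sub_zero]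
  · subst hF
    simp only
    have key : ∀ e, y e ≠ 0 →
        d e * (((x - y) e) ^ 2 + lam * |(x - y) e|) <
        d e * ((x e) ^ 2 + lam * |x e|) := by
      intro e he
      obtain ⟨h1, h2⟩ := hsign e he
      obtain ⟨hsq, habs⟩ := aux_pt (x e) (y e) h1 h2
      have : ((x - y) e) = x e - y e := rfl
      rw [this]
      have := hd e
      nlinarith [mul_le_mul_of_nonneg_left habs hlam]
    have hle : ∀ e ∈ Finset.univ, d e * (((x - y) e) ^ 2 + lam * |(x - y) e|) ≤
        d e * ((x e) ^ 2 + lam * |x e|) := by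
      intro e _
      by_cases he : y e = 0
      · simp [he]
      · exact (key e he).le
    obtain ⟨e0, he0⟩ : ∃ e, y e ≠ 0 := by
      by_contra h
      push_neg at h
      exact hy0 (funext h)
    have := Finset.sum_lt_sum hle ⟨e0, Finset.mem_univ e0, key e0 he0⟩
    linarith
end

section
/- The optimal flow x* minimizing F(x) = (1/2) Σ_e d_e (x_e² + λ|x_e|) subject to A_u x = b_s has acyclic support: if each edge with x*_e ≠ 0 is oriented in the direction of positive flow, the resulting directed subgraph contains no directed cycle. -/
open Matrix

/-- The optimal flow has acyclic support: orienting each edge with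
nonzero optimal flow in the direction of positive flow yields a directed
subgraph with no directed cycle. -/
theorem stmt_5 (nl nu m : ℕ)
    (ends : Fin m → (Fin nl ⊕ Fin nu) × (Fin nl ⊕ Fin nu))
    (hsimple : ∀ e, (ends e).1 ≠ (ends e).2)
    (hconn : ∀ i j : Fin nl ⊕ Fin nu,
      Relation.ReflTransGen (fun u v => ∃ e, ends e = (u, v) ∨ ends e = (v, u)) i j)
    (A : Matrix (Fin nl ⊕ Fin nu) (Fin m) ℝ)
    (hA : ∀ i e, A i e =
      if i = (ends e).1 then 1 else if i = (ends e).2 then -1 else 0)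
    (d : Fin m → ℝ) (hd : ∀ e, 0 < d e)
    (lam : ℝ) (hlam : 0 ≤ lam)
    (F : (Fin m → ℝ) → ℝ)
    (hF : F = fun x => (1 / 2) * ∑ e, d e * ((x e) ^ 2 + lam * |x e|))
    (s : Fin nu) (b : Fin nu → ℝ)
    (hb : b = fun j => if j = s then (-1 : ℝ) else 0)
    (xstar : Fin m → ℝ)
    (hfeas : A.submatrix Sum.inr id *ᵥ xstar = b)
    (hopt : ∀ z, A.submatrix Sum.inr id *ᵥ z = b → F xstar ≤ F z) :
    ∀ v, ¬ Relation.TransGen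
      (fun u w => ∃ e, (ends e = (u, w) ∧ 0 < xstar e) ∨
        (ends e = (w, u) ∧ xstar e < 0)) v v := by
  classical
  intro v hcyc
  -- Build a circulation supported on the cycle, same-signed as xstar.
  have key : ∀ u w : Fin nl ⊕ Fin nu,
      Relation.TransGen (fun u w => ∃ e, (ends e = (u, w) ∧ 0 < xstar e) ∨
        (ends e = (w, u) ∧ xstar e < 0)) u w →
      ∃ c : Fin m → ℝ,
        (∀ i, (A *ᵥ c) i = (if i = u then (1:ℝ) else 0) - (if i = w then 1 else 0)) ∧
        (∀ e, c e ≠ 0 → (0 < xstar e ∧ 1 ≤ c e) ∨ (xstar e < 0 ∧ c e ≤ -1)) ∧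
        (∃ e, c e ≠ 0) := by
    intro u w h
    induction h using Relation.TransGen.trans_induction_on with
    | @single a b hab =>
      obtain ⟨e, hcase⟩ := hab
      rcases hcase with ⟨hend, hpos⟩ | ⟨hend, hneg⟩
      · refine ⟨fun e' => if e' = e then 1 else 0, ?_, ?_, ⟨e, by simp⟩⟩
        · intro i
          have hab' : a ≠ b := by
            have := hsimple e; rw [hend] at this; exact this
          have : (A *ᵥ fun e' => if e' = e then (1:ℝ) else 0) i = A i e := by
            simp [Matrix.mulVec, Finset.sum_ite_eq', dotProduct, mul_ite]
          rw [this, hA, hend]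
          by_cases h1 : i = a <;> by_cases h2 : i = b <;>
            simp_all <;> simp [h1, h2]
        · intro e' he'
          by_cases h1 : e' = e
          · subst h1; left; simp_all
          · simp [h1] at he'
      · refine ⟨fun e' => if e' = e then -1 else 0, ?_, ?_, ⟨e, by simp⟩⟩
        · intro i
          have hab' : b ≠ a := by
            have := hsimple e; rw [hend] at this; exact this
          have : (A *ᵥ fun e' => if e' = e then (-1:ℝ) else 0) i = -(A i e) := by
            simp [Matrix.mulVec, Finset.sum_ite_eq', dotProduct, mul_ite]
          rw [this, hA, hend]
          by_cases h1 : i = a <;> by_cases h2 : i = b <;>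
            simp_all <;> simp [h1, h2]
        · intro e' he'
          by_cases h1 : e' = e
          · subst h1; right; simp_all
          · simp [h1] at he'
    | @trans a bb cc h1 h2 ih1 ih2 =>
      obtain ⟨c1, hA1, hs1, e1, he1⟩ := ih1
      obtain ⟨c2, hA2, hs2, _⟩ := ih2
      have hsum : ∀ e, c1 e + c2 e ≠ 0 →
          (0 < xstar e ∧ 1 ≤ c1 e + c2 e) ∨ (xstar e < 0 ∧ c1 e + c2 e ≤ -1) := by
        intro e he
        by_cases h1e : c1 e = 0
        · rw [h1e, zero_add] at he ⊢
          exact hs2 e he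
        · by_cases h2e : c2 e = 0
          · rw [h2e, add_zero] at he ⊢
            exact hs1 e h1e
          · rcases hs1 e h1e with ⟨hx, hc⟩ | ⟨hx, hc⟩ <;>
              rcases hs2 e h2e with ⟨hx', hc'⟩ | ⟨hx', hc'⟩
            · left; constructor; exact hx; linarith
            · linarith
            · linarith
            · right; constructor; exact hx; linarith
      refine ⟨c1 + c2, ?_, hsum, ⟨e1, ?_⟩⟩
      · intro i
        have : (A *ᵥ (c1 + c2)) i = (A *ᵥ c1) i + (A *ᵥ c2) i := by
          rw [Matrix.mulVec_add]; rfl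
        rw [this, hA1, hA2]; ring
      · show c1 e1 + c2 e1 ≠ 0
        rcases hs1 e1 he1 with ⟨hx, hc⟩ | ⟨hx, hc⟩
        · have h2 : 0 ≤ c2 e1 := by
            by_cases h2e : c2 e1 = 0
            · rw [h2e]
            · rcases hs2 e1 h2e with ⟨_, hc'⟩ | ⟨hx', _⟩
              · linarith
              · linarith
          linarith
        · have h2 : c2 e1 ≤ 0 := by
            by_cases h2e : c2 e1 = 0
            · rw [h2e]
            · rcases hs2 e1 h2e with ⟨hx', _⟩ | ⟨_, hc'⟩
              · linarith
              · linarith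
          linarith
  obtain ⟨c, hAc, hsign, e0, he0⟩ := key v v hcyc
  have hAc0 : ∀ i, (A *ᵥ c) i = 0 := by
    intro i; rw [hAc]; ring
  -- choose epsilon
  set S : Finset (Fin m) := Finset.univ.filter (fun e => c e ≠ 0) with hS
  have hSne : S.Nonempty := ⟨e0, by simp [hS, he0]⟩
  set ε : ℝ := S.inf' hSne (fun e => |xstar e| / |c e|) with hε
  have hmemS : ∀ e, e ∈ S ↔ c e ≠ 0 := by intro e; simp [hS]
  have hxne : ∀ e, c e ≠ 0 → xstar e ≠ 0 := by
    intro e he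
    rcases hsign e he with ⟨hx, _⟩ | ⟨hx, _⟩ <;> intro h0 <;> rw [h0] at hx <;> linarith
  have hεpos : 0 < ε := by
    rw [hε, Finset.lt_inf'_iff]
    intro e he
    rw [hmemS] at he
    exact div_pos (abs_pos.mpr (hxne e he)) (abs_pos.mpr he)
  have hεle : ∀ e, c e ≠ 0 → ε * |c e| ≤ |xstar e| := by
    intro e he
    have h1 : ε ≤ |xstar e| / |c e| := Finset.inf'_le _ ((hmemS e).mpr he)
    have h2 : 0 < |c e| := abs_pos.mpr he
    calc ε * |c e| ≤ (|xstar e| / |c e|) * |c e| := by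
          exact mul_le_mul_of_nonneg_right h1 (le_of_lt h2)
      _ = |xstar e| := by field_simp
  set z : Fin m → ℝ := fun e => xstar e - ε * c e with hz
  -- feasibility of z
  have hzfeas : A.submatrix Sum.inr id *ᵥ z = b := by
    funext j
    have h1 : (A.submatrix Sum.inr id *ᵥ z) j
        = (A.submatrix Sum.inr id *ᵥ xstar) j - ε * (A *ᵥ c) (Sum.inr j) := by
      simp only [Matrix.mulVec, dotProduct, Matrix.submatrix_apply, id_eq, hz]
      rw [Finset.mul_sum, ← Finset.sum_sub_distrib]
      congr 1; funext e; ring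
    rw [h1, hAc0, hfeas]; ring
  -- strict decrease per edge in support
  have hdec : ∀ e, c e ≠ 0 → (z e) ^ 2 < (xstar e) ^ 2 ∧ |z e| ≤ |xstar e| := by
    intro e he
    have hle := hεle e he
    rcases hsign e he with ⟨hx, hc⟩ | ⟨hx, hc⟩
    · have habs : |c e| = c e := abs_of_pos (by linarith)
      have habsx : |xstar e| = xstar e := abs_of_pos hx
      rw [habs, habsx] at hle
      have hεc : 0 < ε * c e := by positivity
      have hz1 : 0 ≤ z e := by simp only [hz]; linarith
      have hz2 : z e < xstar e := by simp only [hz]; linarith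
      constructor
      · exact pow_lt_pow_left₀ hz2 hz1 (by norm_num)
      · rw [abs_of_nonneg hz1, habsx]; linarith
    · have habs : |c e| = -c e := abs_of_neg (by linarith)
      have habsx : |xstar e| = -xstar e := abs_of_neg hx
      rw [habs, habsx] at hle
      have hεc : ε * c e < 0 := mul_neg_of_pos_of_neg hεpos (by linarith)
      have hz1 : z e ≤ 0 := by simp only [hz]; linarith
      have hz2 : xstar e < z e := by simp only [hz]; linarith
      constructor
      · nlinarith
      · rw [abs_of_nonpos hz1, habsx]; linarith
    -- done
  have hsame : ∀ e, c e = 0 → z e = xstar e := by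
    intro e he; simp [hz, he]
  have hFlt : F z < F xstar := by
    rw [hF]
    have hsum : (∑ e, d e * ((z e) ^ 2 + lam * |z e|))
        < ∑ e, d e * ((xstar e) ^ 2 + lam * |xstar e|) := by
      apply Finset.sum_lt_sum
      · intro e _
        by_cases he : c e = 0
        · rw [hsame e he]
        · obtain ⟨h1, h2⟩ := hdec e he
          have := hd e
          have h3 : lam * |z e| ≤ lam * |xstar e| := mul_le_mul_of_nonneg_left h2 hlam
          nlinarith
      · refine ⟨e0, Finset.mem_univ _, ?_⟩
        obtain ⟨h1, h2⟩ := hdec e0 he0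
        have := hd e0
        have h3 : lam * |z e0| ≤ lam * |xstar e0| := mul_le_mul_of_nonneg_left h2 hlam
        nlinarith
    linarith
  exact absurd (hopt z hzfeas) (not_le.mpr hFlt)
end

section
/- Maximum principle for flow-based weights: the optimal flow x* minimizing F(x) = (1/2) Σ_e d_e (x_e² + λ|x_e|) subject to A_u x = b_s yields weights w = A_l x* with w_i ≥ 0 for all i = 1,...,n_l and Σ_i w_i = 1. Consequently, the prediction f(s) = Σ_i w_i f(i) satisfies min_i f(i) ≤ f(s) ≤ max_i f(i). -/
open Matrix


section Aux
variable {nl nu m : ℕ}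

/-- Perturbation lemma: shrinking the flow along σ strictly decreases cost. -/
lemma perturb_lt
    (A : Matrix (Fin nl ⊕ Fin nu) (Fin m) ℝ)
    (d : Fin m → ℝ) (hd : ∀ e, 0 < d e)
    (lam : ℝ) (hlam : 0 ≤ lam)
    (b : Fin nu → ℝ) (x : Fin m → ℝ)
    (hfeas : A.submatrix Sum.inr id *ᵥ x = b)
    (σ : Fin m → ℝ)
    (hσA : A.submatrix Sum.inr id *ᵥ σ = 0)
    (hsign : ∀ e, σ e = 0 ∨ 0 < σ e * x e)
    (hne : ∃ e, σ e ≠ 0) :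
    ∃ z, A.submatrix Sum.inr id *ᵥ z = b ∧
      (1/2 : ℝ) * ∑ e, d e * ((z e)^2 + lam * |z e|)
        < (1/2 : ℝ) * ∑ e, d e * ((x e)^2 + lam * |x e|) := by
  classical
  set S : Finset (Fin m) := Finset.univ.filter (fun e => σ e ≠ 0) with hS
  obtain ⟨e₀, he₀⟩ := hne
  have hSne : S.Nonempty := ⟨e₀, by simp [hS, he₀]⟩
  have hratio : ∀ e ∈ S, 0 < x e / σ e := by
    intro e he
    have hσe : σ e ≠ 0 := by simpa [hS] using he
    rcases hsign e with h | h
    · exact absurd h hσe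
    · rcases mul_pos_iff.mp h with ⟨h1, h2⟩ | ⟨h1, h2⟩
      · exact div_pos h2 h1
      · exact div_pos_of_neg_of_neg h2 h1
  set ε : ℝ := S.inf' hSne (fun e => x e / σ e) with hε
  have hε0 : 0 < ε := (Finset.lt_inf'_iff hSne).mpr hratio
  refine ⟨x - ε • σ, ?_, ?_⟩
  · rw [Matrix.mulVec_sub, Matrix.mulVec_smul, hfeas, hσA, smul_zero, sub_zero]
  · have key : ∀ e ∈ S, |x e - ε * σ e| = |x e| - ε * |σ e| := by
      intro e he
      have hσe : σ e ≠ 0 := by simpa [hS] using he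
      have hle : ε ≤ x e / σ e := Finset.inf'_le _ he
      have h1 : x e - ε * σ e = σ e * (x e / σ e - ε) := by
        field_simp
      have h2 : x e = σ e * (x e / σ e) := by field_simp
      calc |x e - ε * σ e| = |σ e| * (x e / σ e - ε) := by
            rw [h1, abs_mul, abs_of_nonneg (sub_nonneg.mpr hle)]
        _ = |σ e| * (x e / σ e) - ε * |σ e| := by ring
        _ = |x e| - ε * |σ e| := by
            rw [show |x e| = |σ e| * (x e / σ e) by
              rw [← abs_of_nonneg (hratio e he).le, ← abs_mul, ← h2]]
    have hterm : ∀ e ∈ (Finset.univ : Finset (Fin m)),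
        d e * (((x - ε • σ) e)^2 + lam * |(x - ε • σ) e|)
          ≤ d e * ((x e)^2 + lam * |x e|) := by
      intro e _
      by_cases he : e ∈ S
      · have hσe : σ e ≠ 0 := by simpa [hS] using he
        have habs : |(x - ε • σ) e| = |x e| - ε * |σ e| := by
          simpa using key e he
        have h0 : 0 < ε * |σ e| := mul_pos hε0 (abs_pos.mpr hσe)
        have habs' : |(x - ε • σ) e| < |x e| := by rw [habs]; linarith
        have hsq : ((x - ε • σ) e)^2 ≤ (x e)^2 := by
          rw [← sq_abs ((x - ε • σ) e), ← sq_abs (x e)]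
          exact pow_le_pow_left₀ (abs_nonneg _) habs'.le 2
        have : lam * |(x - ε • σ) e| ≤ lam * |x e| := by
          exact mul_le_mul_of_nonneg_left habs'.le hlam
        have := (hd e).le
        nlinarith [hd e]
      · have hσe : σ e = 0 := by
          by_contra hc; exact he (by simp [hS, hc])
        simp [hσe]
    have hstrict : d e₀ * (((x - ε • σ) e₀)^2 + lam * |(x - ε • σ) e₀|)
          < d e₀ * ((x e₀)^2 + lam * |x e₀|) := by
      have he : e₀ ∈ S := by simp [hS, he₀]
      have habs : |(x - ε • σ) e₀| = |x e₀| - ε * |σ e₀| := by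
        simpa using key e₀ he
      have h0 : 0 < ε * |σ e₀| := mul_pos hε0 (abs_pos.mpr he₀)
      have habs' : |(x - ε • σ) e₀| < |x e₀| := by rw [habs]; linarith
      have hnn : 0 ≤ |(x - ε • σ) e₀| := abs_nonneg _
      have hsq : ((x - ε • σ) e₀)^2 < (x e₀)^2 := by
        rw [← sq_abs ((x - ε • σ) e₀), ← sq_abs (x e₀)]
        nlinarith
      have hl : lam * |(x - ε • σ) e₀| ≤ lam * |x e₀| :=
        mul_le_mul_of_nonneg_left habs'.le hlam
      have := hd e₀
      nlinarith
    have := Finset.sum_lt_sum hterm ⟨e₀, Finset.mem_univ _, hstrict⟩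
    linarith



variable {nl nu m : ℕ}

lemma exists_inedge (A : Matrix (Fin nl ⊕ Fin nu) (Fin m) ℝ) (x : Fin m → ℝ)
    (v : Fin nl ⊕ Fin nu)
    (h2 : (∑ e, A v e * x e < 0) ∨
      ((∑ e, A v e * x e ≤ 0) ∧ ∃ e, 0 < A v e * x e)) :
    ∃ e, A v e * x e < 0 := by
  by_contra hc
  push_neg at hc
  rcases h2 with h2 | ⟨h2, e0, he0⟩
  · exact absurd (Finset.sum_nonneg fun e _ => hc e) (not_le.mpr h2)
  · have : 0 < ∑ e, A v e * x e :=
      Finset.sum_pos' (fun e _ => hc e) ⟨e0, Finset.mem_univ _, he0⟩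
    linarith

lemma other_endpoint
    (ends : Fin m → (Fin nl ⊕ Fin nu) × (Fin nl ⊕ Fin nu))
    (hsimple : ∀ e, (ends e).1 ≠ (ends e).2)
    (A : Matrix (Fin nl ⊕ Fin nu) (Fin m) ℝ)
    (hA : ∀ i e, A i e =
      if i = (ends e).1 then 1 else if i = (ends e).2 then -1 else 0)
    (x : Fin m → ℝ) (e : Fin m) (p : Fin nl ⊕ Fin nu)
    (hp : A p e * x e < 0) :
    ∃ q, 0 < A q e * x e ∧ p ≠ q := by
  rcases lt_trichotomy (x e) 0 with hx | hx | hx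
  · -- x e < 0 : flow head → tail ; p must be the tail, q := head
    refine ⟨(ends e).2, ?_, ?_⟩
    · rw [hA]
      rw [if_neg (Ne.symm (hsimple e)), if_pos rfl]
      linarith
    · intro hpe
      rw [hA, hpe, if_neg (Ne.symm (hsimple e)), if_pos rfl] at hp
      linarith
  · rw [hx, mul_zero] at hp; linarith
  · refine ⟨(ends e).1, ?_, ?_⟩
    · rw [hA, if_pos rfl]; linarith
    · intro hpe
      rw [hA, hpe, if_pos rfl] at hp
      linarith

lemma edge_sign_eq
    (ends : Fin m → (Fin nl ⊕ Fin nu) × (Fin nl ⊕ Fin nu))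
    (hsimple : ∀ e, (ends e).1 ≠ (ends e).2)
    (A : Matrix (Fin nl ⊕ Fin nu) (Fin m) ℝ)
    (hA : ∀ i e, A i e =
      if i = (ends e).1 then 1 else if i = (ends e).2 then -1 else 0)
    (x : Fin m → ℝ) (e : Fin m) (p q : Fin nl ⊕ Fin nu)
    (hp : A p e * x e < 0) (hq : 0 < A q e * x e) (u : Fin nl ⊕ Fin nu) :
    A u e * Real.sign (x e) =
      (if u = q then 1 else 0) - (if u = p then 1 else 0) := by
  rcases lt_trichotomy (x e) 0 with hx | hx | hx
  · -- sign = -1, flow from head to tail: p = tail = ends.1, q = head = ends.2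
    have hsgn : Real.sign (x e) = -1 := Real.sign_of_neg hx
    have hpt : p = (ends e).1 := by
      by_contra hc
      rw [hA, if_neg hc] at hp
      by_cases hc2 : p = (ends e).2
      · rw [if_pos hc2] at hp; linarith
      · rw [if_neg hc2] at hp; linarith
    have hqh : q = (ends e).2 := by
      by_contra hc
      by_cases hc2 : q = (ends e).1
      · rw [hA, if_pos hc2] at hq; linarith
      · rw [hA, if_neg hc2, if_neg hc] at hq; linarith
    rw [hA, hsgn, hpt, hqh]
    by_cases h1 : u = (ends e).1
    · rw [if_pos h1, if_pos h1, if_neg (h1 ▸ hsimple e : u ≠ (ends e).2)]; ring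
    · rw [if_neg h1, if_neg h1]
      by_cases h2 : u = (ends e).2
      · rw [if_pos h2, if_pos h2]; ring
      · rw [if_neg h2, if_neg h2]; ring
  · rw [hx, mul_zero] at hp; linarith
  · have hsgn : Real.sign (x e) = 1 := Real.sign_of_pos hx
    have hph : p = (ends e).2 := by
      by_contra hc
      rw [hA] at hp
      by_cases hc2 : p = (ends e).1
      · rw [if_pos hc2] at hp; linarith
      · rw [if_neg hc2, if_neg hc] at hp; linarith
    have hqt : q = (ends e).1 := by
      by_contra hc
      rw [hA, if_neg hc] at hq
      by_cases hc2 : q = (ends e).2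
      · rw [if_pos hc2] at hq; linarith
      · rw [if_neg hc2] at hq; linarith
    rw [hA, hsgn, hph, hqt]
    by_cases h1 : u = (ends e).1
    · rw [if_pos h1, if_pos h1, if_neg (h1 ▸ hsimple e : u ≠ (ends e).2)]; ring
    · rw [if_neg h1, if_neg h1]
      by_cases h2 : u = (ends e).2
      · rw [if_pos h2, if_pos h2]; ring
      · rw [if_neg h2, if_neg h2]; ring





lemma walk_sigma
    (ends : Fin m → (Fin nl ⊕ Fin nu) × (Fin nl ⊕ Fin nu))
    (hsimple : ∀ e, (ends e).1 ≠ (ends e).2)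
    (A : Matrix (Fin nl ⊕ Fin nu) (Fin m) ℝ)
    (hA : ∀ i e, A i e =
      if i = (ends e).1 then 1 else if i = (ends e).2 then -1 else 0)
    (x : Fin m → ℝ)
    (K : ℕ) (hK : 1 ≤ K) (v : ℕ → Fin nl ⊕ Fin nu) (ed : ℕ → Fin m)
    (hstep : ∀ k < K, A (v k) (ed k) * x (ed k) < 0 ∧
      0 < A (v (k+1)) (ed k) * x (ed k))
    (hend : ∀ j : Fin nu, v K = Sum.inr j ↔ v 0 = Sum.inr j) :
    ∃ σ : Fin m → ℝ, (A.submatrix Sum.inr id *ᵥ σ = 0) ∧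
      (∀ e, σ e = 0 ∨ 0 < σ e * x e) ∧ (∃ e, σ e ≠ 0) := by
  classical
  set σ : Fin m → ℝ :=
    fun e => ∑ k ∈ Finset.range K, if ed k = e then Real.sign (x e) else 0 with hσ
  have hσcount : ∀ e, σ e =
      (((Finset.range K).filter (fun k => ed k = e)).card : ℝ) * Real.sign (x e) := by
    intro e
    show (∑ k ∈ Finset.range K, if ed k = e then Real.sign (x e) else 0) = _
    rw [← Finset.sum_filter, Finset.sum_const, nsmul_eq_mul]
  have hxne : ∀ k < K, x (ed k) ≠ 0 := by
    intro k hk hx0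
    have := (hstep k hk).1
    rw [hx0, mul_zero] at this; linarith
  refine ⟨σ, ?_, ?_, ?_⟩
  · funext j
    have hmv : (A.submatrix Sum.inr id *ᵥ σ) j = ∑ e, A (Sum.inr j) e * σ e := by
      simp [Matrix.mulVec, dotProduct, Matrix.submatrix_apply]
    rw [hmv]
    have hswap : ∑ e, A (Sum.inr j) e * σ e
        = ∑ k ∈ Finset.range K, A (Sum.inr j) (ed k) * Real.sign (x (ed k)) := by
      simp_rw [hσ, Finset.mul_sum]
      rw [Finset.sum_comm]
      refine Finset.sum_congr rfl fun k hk => ?_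
      rw [Finset.sum_eq_single (ed k)]
      · simp
      · intro e _ hne
        rw [if_neg (Ne.symm hne), mul_zero]
      · intro h; exact absurd (Finset.mem_univ _) h
    rw [hswap]
    have hterm : ∀ k ∈ Finset.range K,
        A (Sum.inr j) (ed k) * Real.sign (x (ed k)) =
          (if Sum.inr j = v (k+1) then (1:ℝ) else 0)
            - (if Sum.inr j = v k then (1:ℝ) else 0) := by
      intro k hk
      rw [Finset.mem_range] at hk
      exact edge_sign_eq ends hsimple A hA x (ed k) (v k) (v (k+1))
        (hstep k hk).1 (hstep k hk).2 (Sum.inr j)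
    rw [Finset.sum_congr rfl hterm,
      Finset.sum_range_sub (fun k => if Sum.inr j = v k then (1:ℝ) else 0)]
    have : (Sum.inr j = v K) ↔ (Sum.inr j = v 0) := by
      constructor
      · intro h; exact ((hend j).mp h.symm).symm
      · intro h; exact ((hend j).mpr h.symm).symm
    simp only [Pi.zero_apply]
    by_cases h : Sum.inr j = v 0
    · rw [if_pos (this.mpr h), if_pos h]; ring
    · rw [if_neg (fun hc => h (this.mp hc)), if_neg h]; ring
  · intro e
    rcases Nat.eq_zero_or_pos ((Finset.range K).filter (fun k => ed k = e)).card
      with hc | hc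
    · left; rw [hσcount, hc]; simp
    · right
      obtain ⟨k, hk⟩ := Finset.card_pos.mp hc
      rw [Finset.mem_filter, Finset.mem_range] at hk
      have hxk : x e ≠ 0 := hk.2 ▸ hxne k hk.1
      rw [hσcount]
      have hsx : 0 < Real.sign (x e) * x e := by
        rcases lt_or_gt_of_ne hxk with h | h
        · rw [Real.sign_of_neg h]; nlinarith
        · rw [Real.sign_of_pos h]; nlinarith
      have : (0:ℝ) < (((Finset.range K).filter (fun k => ed k = e)).card : ℝ) := by
        exact_mod_cast hc
      calc (0:ℝ) < _ * (Real.sign (x e) * x e) := mul_pos this hsx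
        _ = _ * Real.sign (x e) * x e := by ring
  · refine ⟨ed 0, ?_⟩
    rw [hσcount]
    have hmem : 0 ∈ (Finset.range K).filter (fun k => ed k = ed 0) := by
      simp only [Finset.mem_filter, Finset.mem_range]
      exact ⟨hK, trivial⟩
    have hc : 0 < ((Finset.range K).filter (fun k => ed k = ed 0)).card :=
      Finset.card_pos.mpr ⟨0, hmem⟩
    have hxk : x (ed 0) ≠ 0 := hxne 0 hK
    have : Real.sign (x (ed 0)) ≠ 0 := by
      rcases lt_or_gt_of_ne hxk with h | h
      · rw [Real.sign_of_neg h]; norm_num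
      · rw [Real.sign_of_pos h]; norm_num
    exact mul_ne_zero (by exact_mod_cast hc.ne') this



end Aux

/-- Maximum principle for flow-based weights: the optimal flow
yields nonnegative weights summing to one, so the prediction
`f(s) = Σᵢ wᵢ f(i)` lies between the smallest and largest label values. -/
theorem stmt_6 (nl nu m : ℕ) (hnl : 0 < nl)
    (ends : Fin m → (Fin nl ⊕ Fin nu) × (Fin nl ⊕ Fin nu))
    (hsimple : ∀ e, (ends e).1 ≠ (ends e).2)
    (hconn : ∀ i j : Fin nl ⊕ Fin nu,
      Relation.ReflTransGen (fun u v => ∃ e, ends e = (u, v) ∨ ends e = (v, u)) i j)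
    (A : Matrix (Fin nl ⊕ Fin nu) (Fin m) ℝ)
    (hA : ∀ i e, A i e =
      if i = (ends e).1 then 1 else if i = (ends e).2 then -1 else 0)
    (d : Fin m → ℝ) (hd : ∀ e, 0 < d e)
    (lam : ℝ) (hlam : 0 ≤ lam)
    (F : (Fin m → ℝ) → ℝ)
    (hF : F = fun x => (1 / 2) * ∑ e, d e * ((x e) ^ 2 + lam * |x e|))
    (s : Fin nu) (b : Fin nu → ℝ)
    (hb : b = fun j => if j = s then (-1 : ℝ) else 0)
    (xstar : Fin m → ℝ)
    (hfeas : A.submatrix Sum.inr id *ᵥ xstar = b)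
    (hopt : ∀ z, A.submatrix Sum.inr id *ᵥ z = b → F xstar ≤ F z)
    (w : Fin nl → ℝ) (hw : w = A.submatrix Sum.inl id *ᵥ xstar)
    (fl : Fin nl → ℝ) :
    (∀ i, 0 ≤ w i) ∧ (∑ i, w i = 1) ∧
    (Finset.univ.inf' (Finset.univ_nonempty_iff.mpr ⟨⟨0, hnl⟩⟩) fl
        ≤ ∑ i, w i * fl i) ∧
    (∑ i, w i * fl i
        ≤ Finset.univ.sup' (Finset.univ_nonempty_iff.mpr ⟨⟨0, hnl⟩⟩) fl) := by
  classical
  have hAx : ∀ j : Fin nu, ∑ e, A (Sum.inr j) e * xstar e = b j := by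
    intro j
    have := congrFun hfeas j
    simpa [Matrix.mulVec, dotProduct, Matrix.submatrix_apply] using this
  have hwdef : ∀ i : Fin nl, w i = ∑ e, A (Sum.inl i) e * xstar e := by
    intro i; rw [hw]
    simp [Matrix.mulVec, dotProduct, Matrix.submatrix_apply]
  have hb_nonpos : ∀ j, b j ≤ 0 := by
    intro j; rw [hb]; dsimp only; split_ifs <;> norm_num
  -- `Bad`: there is a flow walk that can be cancelled
  have hbadfalse : ∀ (K : ℕ), 1 ≤ K → ∀ (v : ℕ → Fin nl ⊕ Fin nu) (ed : ℕ → Fin m),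
      (∀ k < K, A (v k) (ed k) * xstar (ed k) < 0 ∧
        0 < A (v (k+1)) (ed k) * xstar (ed k)) →
      (∀ j : Fin nu, v K = Sum.inr j ↔ v 0 = Sum.inr j) → False := by
    intro K hK v ed hstep hend
    obtain ⟨σ, h1, h2, h3⟩ := walk_sigma ends hsimple A hA xstar K hK v ed hstep hend
    obtain ⟨z, hzfeas, hzlt⟩ := perturb_lt A d hd lam hlam b xstar hfeas σ h1 h2 h3
    have hle := hopt z hzfeas
    rw [hF] at hle
    simp only at hle
    linarith
  have hpos : ∀ i, 0 ≤ w i := by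
    intro i
    by_contra hneg
    push_neg at hneg
    -- build an arbitrarily long backward flow walk starting at `inl i`
    have key : ∀ N : ℕ, ∃ (v : ℕ → Fin nl ⊕ Fin nu) (ed : ℕ → Fin m),
        v 0 = Sum.inl i ∧
        (∀ k < N + 1, A (v k) (ed k) * xstar (ed k) < 0 ∧
          0 < A (v (k+1)) (ed k) * xstar (ed k)) ∧
        (∀ k, 1 ≤ k → k ≤ N + 1 → ∃ j, v k = Sum.inr j) := by
      intro N
      induction N with
      | zero =>
        have hin : ∃ e, A (Sum.inl i) e * xstar e < 0 := by
          apply exists_inedge A xstar (Sum.inl i) (Or.inl ?_)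
          rw [← hwdef i]; exact hneg
        obtain ⟨e0, he0⟩ := hin
        obtain ⟨u, hu, hpu⟩ := other_endpoint ends hsimple A hA xstar e0 (Sum.inl i) he0
        set v : ℕ → Fin nl ⊕ Fin nu := fun k => if k = 0 then Sum.inl i else u with hvdef
        set ed : ℕ → Fin m := fun _ => e0 with heddef
        have hv0 : v 0 = Sum.inl i := by simp [hvdef]
        have hv1 : v 1 = u := by simp [hvdef]
        have hstep0 : ∀ k < 1, A (v k) (ed k) * xstar (ed k) < 0 ∧
            0 < A (v (k+1)) (ed k) * xstar (ed k) := by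
          intro k hk
          have hk0 : k = 0 := by omega
          subst hk0
          have hed : ed 0 = e0 := rfl
          rw [hed, hv0, hv1]
          exact ⟨he0, hu⟩
        refine ⟨v, ed, hv0, hstep0, ?_⟩
        intro k hk1 hk2
        have hk : k = 1 := by omega
        subst hk
        rcases hu' : u with i' | j
        · exfalso
          apply hbadfalse 1 le_rfl v ed hstep0
          intro j'
          constructor
          · intro h; rw [hv1, hu'] at h; exact absurd h (Sum.inl_ne_inr)
          · intro h; rw [hv0] at h; exact absurd h (Sum.inl_ne_inr)
        · exact ⟨j, by rw [hv1, hu']⟩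
      | succ N ih =>
        obtain ⟨v, ed, hv0, hstep, hunl⟩ := ih
        obtain ⟨j, hj⟩ := hunl (N+1) (by omega) le_rfl
        have hout : 0 < A (v (N+1)) (ed N) * xstar (ed N) := (hstep N (by omega)).2
        have hin : ∃ e, A (Sum.inr j) e * xstar e < 0 := by
          apply exists_inedge A xstar (Sum.inr j)
            (Or.inr ⟨by rw [hAx j]; exact hb_nonpos j, ⟨ed N, by rw [← hj]; exact hout⟩⟩)
        obtain ⟨e', he'⟩ := hin
        obtain ⟨u, hu, _⟩ := other_endpoint ends hsimple A hA xstar e' (Sum.inr j) he'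
        set v' : ℕ → Fin nl ⊕ Fin nu := Function.update v (N+2) u with hv'def
        set ed' : ℕ → Fin m := Function.update ed (N+1) e' with hed'def
        have hv'eq : ∀ k, k ≠ N + 2 → v' k = v k := by
          intro k hk; rw [hv'def]; exact Function.update_of_ne hk _ _
        have hv'top : v' (N+2) = u := by rw [hv'def]; exact Function.update_self _ _ _
        have hed'eq : ∀ k, k ≠ N + 1 → ed' k = ed k := by
          intro k hk; rw [hed'def]; exact Function.update_of_ne hk _ _
        have hed'top : ed' (N+1) = e' := by rw [hed'def]; exact Function.update_self _ _ _
        have hv'0 : v' 0 = Sum.inl i := by rw [hv'eq 0 (by omega)]; exact hv0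
        have hstep' : ∀ k < N + 2, A (v' k) (ed' k) * xstar (ed' k) < 0 ∧
            0 < A (v' (k+1)) (ed' k) * xstar (ed' k) := by
          intro k hk
          rcases Nat.lt_or_ge k (N+1) with hk' | hk'
          · rw [hv'eq k (by omega), hv'eq (k+1) (by omega), hed'eq k (by omega)]
            exact hstep k hk'
          · have hkN : k = N + 1 := by omega
            subst hkN
            rw [hv'eq (N+1) (by omega), hed'top, hv'top, hj]
            exact ⟨he', hu⟩
        refine ⟨v', ed', hv'0, hstep', ?_⟩
        intro k hk1 hk2
        rcases Nat.lt_or_ge k (N+2) with hk' | hk'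
        · obtain ⟨j', hj'⟩ := hunl k hk1 (by omega)
          exact ⟨j', by rw [hv'eq k (by omega)]; exact hj'⟩
        · have hkN : k = N + 2 := by omega
          subst hkN
          rcases hu' : u with i' | j'
          · exfalso
            apply hbadfalse (N+2) (by omega) v' ed' hstep'
            intro j''
            constructor
            · intro h; rw [hv'top, hu'] at h; exact absurd h (Sum.inl_ne_inr)
            · intro h; rw [hv'0] at h; exact absurd h (Sum.inl_ne_inr)
          · exact ⟨j', by rw [hv'top, hu']⟩
    -- pigeonhole: the long walk revisits a vertex, giving a cycle
    obtain ⟨v, ed, hv0, hstep, hunl⟩ := key (nl + nu)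
    have hcard : Fintype.card (Fin nl ⊕ Fin nu) < Fintype.card (Fin (nl + nu + 1)) := by
      simp [Fintype.card_sum]
    obtain ⟨a, c, hac, heq⟩ := Fintype.exists_ne_map_eq_of_card_lt
      (fun k : Fin (nl + nu + 1) => v k) hcard
    have hvac : v (a : ℕ) = v (c : ℕ) := heq
    -- wlog a < c
    rcases Ne.lt_or_gt (fun h => hac (Fin.ext h) : (a : ℕ) ≠ (c : ℕ)) with hlt | hlt
    case _ =>
      apply hbadfalse ((c : ℕ) - (a : ℕ)) (by omega)
        (fun k => v ((a : ℕ) + k)) (fun k => ed ((a : ℕ) + k)) ?_ ?_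
      · intro k hk
        have h1 : (a : ℕ) + k < nl + nu + 1 := by omega
        have h2 : (a : ℕ) + (k + 1) = ((a : ℕ) + k) + 1 := by omega
        rw [h2]
        exact hstep ((a : ℕ) + k) h1
      · intro j'
        have h1 : (a : ℕ) + ((c : ℕ) - (a : ℕ)) = (c : ℕ) := by omega
        have h2 : (a : ℕ) + 0 = (a : ℕ) := by omega
        rw [h1, h2, hvac]
    case _ =>
      apply hbadfalse ((a : ℕ) - (c : ℕ)) (by omega)
        (fun k => v ((c : ℕ) + k)) (fun k => ed ((c : ℕ) + k)) ?_ ?_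
      · intro k hk
        have h1 : (c : ℕ) + k < nl + nu + 1 := by omega
        have h2 : (c : ℕ) + (k + 1) = ((c : ℕ) + k) + 1 := by omega
        rw [h2]
        exact hstep ((c : ℕ) + k) h1
      · intro j'
        have h1 : (c : ℕ) + ((a : ℕ) - (c : ℕ)) = (a : ℕ) := by omega
        have h2 : (c : ℕ) + 0 = (c : ℕ) := by omega
        rw [h1, h2, hvac]
  -- sum of weights is one
  have hcol : ∀ e, ∑ u : Fin nl ⊕ Fin nu, A u e = 0 := by
    intro e
    have hpt : ∀ u : Fin nl ⊕ Fin nu, A u e =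
        (if u = (ends e).1 then (1:ℝ) else 0) + (if u = (ends e).2 then (-1:ℝ) else 0) := by
      intro u
      rw [hA]
      by_cases h1 : u = (ends e).1
      · simp [h1, hsimple e]
      · by_cases h2 : u = (ends e).2 <;> simp [h1, h2, Ne.symm (hsimple e)]
    rw [Finset.sum_congr rfl (fun u _ => hpt u), Finset.sum_add_distrib,
      Finset.sum_ite_eq' Finset.univ ((ends e).1) (fun _ => (1:ℝ)),
      Finset.sum_ite_eq' Finset.univ ((ends e).2) (fun _ => (-1:ℝ))]
    simp
  have htot : ∑ u : Fin nl ⊕ Fin nu, ∑ e, A u e * xstar e = 0 := by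
    rw [Finset.sum_comm]
    have : ∀ e ∈ (Finset.univ : Finset (Fin m)),
        ∑ u : Fin nl ⊕ Fin nu, A u e * xstar e = 0 := by
      intro e _
      rw [← Finset.sum_mul, hcol, zero_mul]
    rw [Finset.sum_congr rfl this, Finset.sum_const_zero]
  have hsum : ∑ i, w i = 1 := by
    have hsplit := Fintype.sum_sum_type (fun u : Fin nl ⊕ Fin nu => ∑ e, A u e * xstar e)
    rw [htot] at hsplit
    have hr : ∑ j, ∑ e, A (Sum.inr j) e * xstar e = -1 := by
      rw [Finset.sum_congr rfl (fun j _ => hAx j), hb]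
      rw [Finset.sum_ite_eq' Finset.univ s (fun _ => (-1:ℝ))]
      simp
    have hl : ∑ i, w i = ∑ i, ∑ e, A (Sum.inl i) e * xstar e :=
      Finset.sum_congr rfl fun i _ => hwdef i
    rw [hl]
    rw [hr] at hsplit
    linarith
  refine ⟨hpos, hsum, ?_, ?_⟩
  · calc Finset.univ.inf' (Finset.univ_nonempty_iff.mpr ⟨⟨0, hnl⟩⟩) fl
        = ∑ i, w i * Finset.univ.inf' (Finset.univ_nonempty_iff.mpr ⟨⟨0, hnl⟩⟩) fl := by
          rw [← Finset.sum_mul, hsum, one_mul]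
      _ ≤ ∑ i, w i * fl i := Finset.sum_le_sum fun i _ =>
          mul_le_mul_of_nonneg_left (Finset.inf'_le _ (Finset.mem_univ i)) (hpos i)
  · calc ∑ i, w i * fl i
        ≤ ∑ i, w i * Finset.univ.sup' (Finset.univ_nonempty_iff.mpr ⟨⟨0, hnl⟩⟩) fl :=
          Finset.sum_le_sum fun i _ =>
            mul_le_mul_of_nonneg_left (Finset.le_sup' _ (Finset.mem_univ i)) (hpos i)
      _ = Finset.univ.sup' (Finset.univ_nonempty_iff.mpr ⟨⟨0, hnl⟩⟩) fl := by
          rw [← Finset.sum_mul, hsum, one_mul]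
end

section
/- If the underlying graph is connected and there is at least one labeled node, the principal submatrix L_{uu} = A_u D^{-1} A_u^T of the Laplacian L = A D^{-1} A^T indexed by the unlabeled nodes is positive definite (hence invertible). -/
open Matrix

/-- If the graph is connected and at least one node is labeled,
the unlabeled principal block `L_uu = A_u D⁻¹ A_uᵀ` of the Laplacian is
positive definite. -/
theorem stmt_9 (nl nu m : ℕ) (hnl : 0 < nl)
    (ends : Fin m → (Fin nl ⊕ Fin nu) × (Fin nl ⊕ Fin nu))
    (hsimple : ∀ e, (ends e).1 ≠ (ends e).2)
    (hconn : ∀ i j : Fin nl ⊕ Fin nu,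
      Relation.ReflTransGen (fun u v => ∃ e, ends e = (u, v) ∨ ends e = (v, u)) i j)
    (A : Matrix (Fin nl ⊕ Fin nu) (Fin m) ℝ)
    (hA : ∀ i e, A i e =
      if i = (ends e).1 then 1 else if i = (ends e).2 then -1 else 0)
    (d : Fin m → ℝ) (hd : ∀ e, 0 < d e) :
    (A.submatrix Sum.inr id * (Matrix.diagonal d)⁻¹ *
      (A.submatrix Sum.inr id)ᵀ).PosDef := by
  classical
  set B : Matrix (Fin nu) (Fin m) ℝ := A.submatrix Sum.inr id with hBdef
  set g : Fin m → ℝ := fun e => (d e)⁻¹ with hgdef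
  have hg : ∀ e, 0 < g e := fun e => inv_pos.2 (hd e)
  have hdinv : (Matrix.diagonal d)⁻¹ = Matrix.diagonal g := by
    apply Matrix.inv_eq_right_inv
    rw [Matrix.diagonal_mul_diagonal]
    ext i j
    simp only [Matrix.diagonal_apply, Matrix.one_apply, hgdef]
    by_cases h : i = j
    · simp [h, mul_inv_cancel₀ (hd j).ne']
    · simp [h]
  rw [hdinv]
  -- the quadratic form
  have key : ∀ x : Fin nu → ℝ,
      x ⬝ᵥ ((B * Matrix.diagonal g * Bᵀ) *ᵥ x)
        = ∑ e, g e * ((Bᵀ *ᵥ x) e) ^ 2 := by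
    intro x
    have h1 : (B * Matrix.diagonal g * Bᵀ) *ᵥ x
        = B *ᵥ (Matrix.diagonal g *ᵥ (Bᵀ *ᵥ x)) := by
      simp [Matrix.mulVec_mulVec, Matrix.mul_assoc]
    rw [h1, Matrix.dotProduct_mulVec]
    have h2 : x ᵥ* B = Bᵀ *ᵥ x := by
      rw [← Matrix.transpose_transpose B, Matrix.vecMul_transpose,
        Matrix.transpose_transpose]
    rw [h2]
    simp only [dotProduct, Matrix.mulVec_diagonal]
    exact Finset.sum_congr rfl fun e _ => by ring
  -- value of `Bᵀ *ᵥ x` on an edge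
  have edge : ∀ (x : Fin nu → ℝ) (e : Fin m),
      (Bᵀ *ᵥ x) e
        = Sum.elim (fun _ => (0:ℝ)) x (ends e).1
          - Sum.elim (fun _ => (0:ℝ)) x (ends e).2 := by
    intro x e
    set y : (Fin nl ⊕ Fin nu) → ℝ := Sum.elim (fun _ => (0:ℝ)) x with hy
    have h3 : (Bᵀ *ᵥ x) e = ∑ i : Fin nl ⊕ Fin nu, A i e * y i := by
      rw [Fintype.sum_sum_type]
      simp [Matrix.mulVec, dotProduct, hBdef, hy, Matrix.transpose_apply]
    rw [h3]
    have h4 : ∀ i : Fin nl ⊕ Fin nu, A i e * y i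
        = (if i = (ends e).1 then y (ends e).1 else 0)
          + (if i = (ends e).2 then -y (ends e).2 else 0) := by
      intro i
      rw [hA]
      by_cases h1 : i = (ends e).1
      · subst h1
        simp [(hsimple e)]
      · by_cases h2 : i = (ends e).2
        · subst h2
          simp [h1]
        · simp [h1, h2]
    rw [Finset.sum_congr rfl fun i _ => h4 i, Finset.sum_add_distrib]
    simp [sub_eq_add_neg]
  refine Matrix.posDef_iff_dotProduct_mulVec.mpr ⟨?_, ?_⟩
  · -- Hermitian
    show _ = _
    rw [Matrix.conjTranspose_eq_transpose_of_trivial, Matrix.transpose_mul,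
      Matrix.transpose_mul, Matrix.transpose_transpose, Matrix.diagonal_transpose,
      Matrix.mul_assoc]
  · intro x hx
    have hstar : star x = x := by
      funext i; simp
    rw [hstar, key x]
    have hnonneg : ∀ e ∈ Finset.univ, 0 ≤ g e * ((Bᵀ *ᵥ x) e) ^ 2 :=
      fun e _ => mul_nonneg (hg e).le (sq_nonneg _)
    have hsum : 0 ≤ ∑ e, g e * ((Bᵀ *ᵥ x) e) ^ 2 := Finset.sum_nonneg hnonneg
    rcases lt_or_eq_of_le hsum with h | h
    · exact h
    · exfalso
      -- all edge differences vanish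
      have hzero : ∀ e, (Bᵀ *ᵥ x) e = 0 := by
        intro e
        have := (Finset.sum_eq_zero_iff_of_nonneg hnonneg).mp h.symm e
          (Finset.mem_univ e)
        have hge : g e ≠ 0 := (hg e).ne'
        have := mul_eq_zero.mp this
        rcases this with h' | h'
        · exact absurd h' hge
        · exact pow_eq_zero_iff (n := 2) (by norm_num) |>.mp h'
      set y : (Fin nl ⊕ Fin nu) → ℝ := Sum.elim (fun _ => (0:ℝ)) x with hy
      have hedge0 : ∀ e, y (ends e).1 = y (ends e).2 := by
        intro e
        have := edge x e
        rw [hzero e] at this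
        linarith [this]
      have hconst : ∀ u v, Relation.ReflTransGen
          (fun u v => ∃ e, ends e = (u, v) ∨ ends e = (v, u)) u v →
          y u = y v := by
        intro u v h
        induction h with
        | refl => rfl
        | tail _ hrel ih =>
          rename_i b c _
          obtain ⟨e, he | he⟩ := hrel
          · have := hedge0 e
            rw [he] at this
            exact ih.trans this
          · have := hedge0 e
            rw [he] at this
            exact ih.trans this.symm
      apply hx
      funext j
      have h0 : y (Sum.inr j) = y (Sum.inl ⟨0, hnl⟩) :=
        (hconst _ _ (hconn (Sum.inr j) (Sum.inl ⟨0, hnl⟩)))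
      simpa [hy] using h0
end

section
/- No labeled node receives net in-flow at the optimum: if x* minimizes F(x) = (1/2) Σ_e d_e (x_e² + λ|x_e|) subject to A_u x = b_s, then every entry of w = A_l x* is nonnegative. (Proof idea: a labeled node with negative out-flow admits a positive flow-path from another labeled node into it, which can be subtracted to strictly reduce the objective.) -/
open Matrix

lemma flow_of_reach {nl nu m : ℕ}
    (ends : Fin m → (Fin nl ⊕ Fin nu) × (Fin nl ⊕ Fin nu))
    (hsimple : ∀ e, (ends e).1 ≠ (ends e).2)
    (A : Matrix (Fin nl ⊕ Fin nu) (Fin m) ℝ)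
    (hA : ∀ i e, A i e = if i = (ends e).1 then 1 else if i = (ends e).2 then -1 else 0)
    (x : Fin m → ℝ)
    {a b : Fin nl ⊕ Fin nu}
    (h : Relation.ReflTransGen
      (fun u v => ∃ e, (ends e = (u, v) ∧ 0 < x e) ∨ (ends e = (v, u) ∧ x e < 0)) a b) :
    ∃ c : Fin m → ℝ,
      (∀ v, (A *ᵥ c) v = (if v = a then 1 else 0) - (if v = b then 1 else 0)) ∧
      (∀ e, c e = 0 ∨ (0 < c e ∧ 0 < x e) ∨ (c e < 0 ∧ x e < 0)) := by
  induction h with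
  | refl =>
      refine ⟨0, fun v => ?_, fun e => Or.inl rfl⟩
      simp [Matrix.mulVec_zero]
  | @tail p q htail hstep ih =>
      obtain ⟨c', hc1, hc2⟩ := ih
      obtain ⟨e₀, he⟩ := hstep
      set σ : ℝ := if 0 < x e₀ then 1 else -1 with hσ
      refine ⟨fun e => (if e = e₀ then σ else 0) + c' e, fun v => ?_, fun e => ?_⟩
      · have hw : (A *ᵥ fun e => if e = e₀ then σ else 0) v = A v e₀ * σ := by
          simp [Matrix.mulVec, dotProduct, Finset.sum_ite_eq']
        have hsplit : (A *ᵥ fun e => (if e = e₀ then σ else 0) + c' e) v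
            = A v e₀ * σ + (A *ᵥ c') v := by
          rw [show (fun e => (if e = e₀ then σ else 0) + c' e)
              = (fun e => if e = e₀ then σ else 0) + c' from rfl, Matrix.mulVec_add]
          simp [hw]
        rw [hsplit, hc1]
        have hcol : A v e₀ * σ = (if v = p then 1 else 0) - (if v = q then 1 else 0) := by
          rcases he with ⟨h1, h2⟩ | ⟨h1, h2⟩
          · have hσ1 : σ = 1 := if_pos h2
            have hne : p ≠ q := by
              have := hsimple e₀; rw [h1] at this; exact this
            rw [hA, h1, hσ1]
            by_cases hvp : v = p <;> by_cases hvq : v = q <;>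
              simp [hvp, hvq, hne, hne.symm]
          · have hσ1 : σ = -1 := by rw [hσ, if_neg (not_lt.mpr h2.le)]
            have hne : q ≠ p := by
              have := hsimple e₀; rw [h1] at this; exact this
            rw [hA, h1, hσ1]
            by_cases hvp : v = p <;> by_cases hvq : v = q <;>
              simp [hvp, hvq, hne, hne.symm]
        rw [hcol]; ring
      · by_cases hee : e = e₀
        · subst hee
          rcases he with ⟨_, h2⟩ | ⟨_, h2⟩
          · have hσ1 : σ = 1 := if_pos h2
            have hge : 0 ≤ c' e := by
              rcases hc2 e with h | ⟨h, _⟩ | ⟨_, h⟩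
              · exact le_of_eq h.symm
              · exact h.le
              · exact absurd h2 (not_lt.mpr h.le)
            refine Or.inr (Or.inl ⟨?_, h2⟩)
            show 0 < (if e = e then σ else 0) + c' e
            rw [if_pos rfl, hσ1]; linarith
          · have hσ1 : σ = -1 := by rw [hσ, if_neg (not_lt.mpr h2.le)]
            have hle : c' e ≤ 0 := by
              rcases hc2 e with h | ⟨_, h⟩ | ⟨h, _⟩
              · exact le_of_eq h
              · exact absurd h2 (not_lt.mpr h.le)
              · exact h.le
            refine Or.inr (Or.inr ⟨?_, h2⟩)
            show (if e = e then σ else 0) + c' e < 0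
            rw [if_pos rfl, hσ1]; linarith
        · simpa [hee] using hc2 e

/-- No labeled node receives net in-flow at the optimum: every
entry of `w = A_l x*` is nonnegative, where `x*` minimizes
`F(x) = (1/2) Σₑ dₑ (xₑ² + λ|xₑ|)` subject to `A_u x = b_s`. -/
theorem stmt_13 (nl nu m : ℕ)
    (ends : Fin m → (Fin nl ⊕ Fin nu) × (Fin nl ⊕ Fin nu))
    (hsimple : ∀ e, (ends e).1 ≠ (ends e).2)
    (hconn : ∀ i j : Fin nl ⊕ Fin nu,
      Relation.ReflTransGen (fun u v => ∃ e, ends e = (u, v) ∨ ends e = (v, u)) i j)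
    (A : Matrix (Fin nl ⊕ Fin nu) (Fin m) ℝ)
    (hA : ∀ i e, A i e =
      if i = (ends e).1 then 1 else if i = (ends e).2 then -1 else 0)
    (d : Fin m → ℝ) (hd : ∀ e, 0 < d e)
    (lam : ℝ) (hlam : 0 ≤ lam)
    (F : (Fin m → ℝ) → ℝ)
    (hF : F = fun x => (1 / 2) * ∑ e, d e * ((x e) ^ 2 + lam * |x e|))
    (s : Fin nu) (b : Fin nu → ℝ)
    (hb : b = fun j => if j = s then (-1 : ℝ) else 0)
    (xstar : Fin m → ℝ)
    (hfeas : A.submatrix Sum.inr id *ᵥ xstar = b)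
    (hopt : ∀ z, A.submatrix Sum.inr id *ᵥ z = b → F xstar ≤ F z) :
    ∀ i : Fin nl, 0 ≤ (A.submatrix Sum.inl id *ᵥ xstar) i := by
  intro i
  by_contra hneg
  push_neg at hneg
  classical
  set R : (Fin nl ⊕ Fin nu) → (Fin nl ⊕ Fin nu) → Prop :=
    fun u v => ∃ e, (ends e = (u, v) ∧ 0 < xstar e) ∨ (ends e = (v, u) ∧ xstar e < 0)
    with hR
  set S : Finset (Fin nl ⊕ Fin nu) :=
    Finset.univ.filter (fun u => Relation.ReflTransGen R u (Sum.inl i)) with hS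
  have hiS : Sum.inl i ∈ S := by
    simp only [hS, Finset.mem_filter, Finset.mem_univ, true_and]
    exact Relation.ReflTransGen.refl
  have hdivl : ∀ j, (A.submatrix Sum.inl id *ᵥ xstar) j = (A *ᵥ xstar) (Sum.inl j) := by
    intro j; simp [Matrix.mulVec, Matrix.submatrix, dotProduct]
  have hsubu : ∀ (y : Fin m → ℝ) k, (A.submatrix Sum.inr id *ᵥ y) k = (A *ᵥ y) (Sum.inr k) := by
    intro y k; simp [Matrix.mulVec, Matrix.submatrix, dotProduct]
  have hdivu : ∀ k, (A *ᵥ xstar) (Sum.inr k) = b k := by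
    intro k; rw [← hsubu, hfeas]
  have hclosed : ∀ u v, R u v → v ∈ S → u ∈ S := by
    intro u v huv hv
    simp only [hS, Finset.mem_filter, Finset.mem_univ, true_and] at hv ⊢
    exact Relation.ReflTransGen.head huv hv
  -- the total divergence over S is nonnegative
  have key : 0 ≤ ∑ u ∈ S, (A *ᵥ xstar) u := by
    have hswap : ∑ u ∈ S, (A *ᵥ xstar) u
        = ∑ e, ((if (ends e).1 ∈ S then (1:ℝ) else 0)
            - (if (ends e).2 ∈ S then 1 else 0)) * xstar e := by
      simp only [Matrix.mulVec, dotProduct]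
      rw [Finset.sum_comm]
      refine Finset.sum_congr rfl (fun e _ => ?_)
      have hne := hsimple e
      have hpt : ∀ u, A u e * xstar e
          = (if u = (ends e).1 then xstar e else 0)
            + (if u = (ends e).2 then -xstar e else 0) := by
        intro u
        rw [hA]
        by_cases h1 : u = (ends e).1
        · have h2 : u ≠ (ends e).2 := by rw [h1]; exact hsimple e
          simp [h1, h2, hne]
        · by_cases h2 : u = (ends e).2 <;> simp [h1, h2, hne, Ne.symm hne]
      rw [Finset.sum_congr rfl (fun u _ => hpt u), Finset.sum_add_distrib,
        Finset.sum_ite_eq' S (ends e).1 (fun _ => xstar e),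
        Finset.sum_ite_eq' S (ends e).2 (fun _ => -xstar e)]
      by_cases m1 : (ends e).1 ∈ S <;> by_cases m2 : (ends e).2 ∈ S <;>
        simp [m1, m2, hne, hne.symm] <;> ring
    rw [hswap]
    refine Finset.sum_nonneg (fun e _ => ?_)
    rcases lt_trichotomy (xstar e) 0 with hx | hx | hx
    · -- flow from head to tail : head reaches tail
      by_cases m1 : (ends e).1 ∈ S
      · have hrel : R (ends e).2 (ends e).1 := ⟨e, Or.inr ⟨rfl, hx⟩⟩
        have m2 : (ends e).2 ∈ S := hclosed _ _ hrel m1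
        simp [m1, m2]
      · by_cases m2 : (ends e).2 ∈ S <;> simp [m1, m2] <;> nlinarith
    · simp [hx]
    · by_cases m2 : (ends e).2 ∈ S
      · have hrel : R (ends e).1 (ends e).2 := ⟨e, Or.inl ⟨rfl, hx⟩⟩
        have m1 : (ends e).1 ∈ S := hclosed _ _ hrel m2
        simp [m1, m2]
      · by_cases m1 : (ends e).1 ∈ S <;> simp [m1, m2] <;> nlinarith
  -- there is a node in S with positive divergence
  have hexists : ∃ u ∈ S, 0 < (A *ᵥ xstar) u := by
    by_contra hc; push_neg at hc
    have hlt : ∑ u ∈ S, (A *ᵥ xstar) u < ∑ u ∈ S, (0:ℝ) :=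
      Finset.sum_lt_sum hc ⟨Sum.inl i, hiS, by rw [← hdivl]; exact hneg⟩
    simp at hlt; linarith
  obtain ⟨u, huS, hupos⟩ := hexists
  obtain ⟨j, rfl⟩ : ∃ j, u = Sum.inl j := by
    cases u with
    | inl j => exact ⟨j, rfl⟩
    | inr k =>
        exfalso
        rw [hdivu k, hb] at hupos
        by_cases hk : k = s <;> simp [hk] at hupos <;> linarith
  have hreach : Relation.ReflTransGen R (Sum.inl j) (Sum.inl i) := by
    simpa only [hS, Finset.mem_filter, Finset.mem_univ, true_and] using huS
  have hji : (Sum.inl j : Fin nl ⊕ Fin nu) ≠ Sum.inl i := by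
    intro h
    rw [h, ← hdivl] at hupos
    linarith
  obtain ⟨c, hc1, hc2⟩ := flow_of_reach ends hsimple A hA xstar hreach
  have hcne : ∃ e, c e ≠ 0 := by
    by_contra hc0; push_neg at hc0
    have hc00 : c = 0 := funext hc0
    have := hc1 (Sum.inl j)
    rw [hc00, Matrix.mulVec_zero] at this
    simp [hji] at this
  set T : Finset (Fin m) := Finset.univ.filter (fun e => c e ≠ 0) with hT
  have hTne : T.Nonempty := by
    obtain ⟨e, he⟩ := hcne
    exact ⟨e, by simp [hT, he]⟩
  have hratio : ∀ e ∈ T, 0 < xstar e / c e := by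
    intro e heT
    have hce : c e ≠ 0 := by simpa [hT] using heT
    rcases hc2 e with h | ⟨h1, h2⟩ | ⟨h1, h2⟩
    · exact absurd h hce
    · exact div_pos h2 h1
    · exact div_pos_of_neg_of_neg h2 h1
  set ε : ℝ := (T.inf' hTne fun e => xstar e / c e) / 2 with hε
  have hεpos : 0 < ε := by
    have : 0 < T.inf' hTne fun e => xstar e / c e :=
      (Finset.lt_inf'_iff _).mpr hratio
    simpa [hε] using half_pos this
  have hεle : ∀ e ∈ T, ε ≤ (xstar e / c e) / 2 := by
    intro e heT
    have h : T.inf' hTne (fun e => xstar e / c e) ≤ xstar e / c e :=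
      Finset.inf'_le _ heT
    rw [hε]
    linarith
  set z : Fin m → ℝ := fun e => xstar e - ε * c e with hz
  have hAz : ∀ v, (A *ᵥ z) v = (A *ᵥ xstar) v - ε * (A *ᵥ c) v := by
    intro v
    simp only [Matrix.mulVec, dotProduct, hz]
    rw [Finset.mul_sum, ← Finset.sum_sub_distrib]
    exact Finset.sum_congr rfl (fun e _ => by ring)
  have hzfeas : A.submatrix Sum.inr id *ᵥ z = b := by
    funext k
    rw [hsubu, hAz, hdivu, hc1]
    simp
  -- each edge's cost does not increase, and strictly decreases on T
  have hle' : ∀ e, e ∈ T → d e * (z e ^ 2 + lam * |z e|) < d e * (xstar e ^ 2 + lam * |xstar e|) := by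
    intro e heT
    have hce : c e ≠ 0 := by simpa [hT] using heT
    have hzlt : z e ^ 2 < xstar e ^ 2 ∧ |z e| < |xstar e| := by
      rcases hc2 e with h | ⟨h1, h2⟩ | ⟨h1, h2⟩
      · exact absurd h hce
      · -- c e > 0, xstar e > 0
        have h3 : ε * c e ≤ xstar e / 2 := by
          have := mul_le_mul_of_nonneg_right (hεle e heT) h1.le
          calc ε * c e ≤ ((xstar e / c e) / 2) * c e := this
            _ = xstar e / 2 := by field_simp
        have h4 : 0 < ε * c e := mul_pos hεpos h1
        have hz1 : 0 < z e := by simp only [hz]; linarith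
        have hz2 : z e < xstar e := by simp only [hz]; linarith
        constructor
        · nlinarith
        · rw [abs_of_pos hz1, abs_of_pos h2]; exact hz2
      · -- c e < 0, xstar e < 0
        have h3 : xstar e / 2 ≤ ε * c e := by
          have := mul_le_mul_of_nonpos_right (hεle e heT) h1.le
          calc xstar e / 2 = ((xstar e / c e) / 2) * c e := by field_simp
            _ ≤ ε * c e := this
        have h4 : ε * c e < 0 := mul_neg_of_pos_of_neg hεpos h1
        have hz1 : z e < 0 := by simp only [hz]; linarith
        have hz2 : xstar e < z e := by simp only [hz]; linarith
        constructor
        · nlinarith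
        · rw [abs_of_neg hz1, abs_of_neg h2]; linarith
    have hde := hd e
    nlinarith [hzlt.1, hzlt.2, mul_le_mul_of_nonneg_left hzlt.2.le hlam]
  have hle : ∀ e, d e * (z e ^ 2 + lam * |z e|) ≤ d e * (xstar e ^ 2 + lam * |xstar e|) := by
    intro e
    by_cases heT : e ∈ T
    · exact (hle' e heT).le
    · have hce : c e = 0 := by simpa [hT] using heT
      have : z e = xstar e := by simp [hz, hce]
      rw [this]
  have hFlt : F z < F xstar := by
    rw [hF]
    simp only
    have hsum : ∑ e, d e * (z e ^ 2 + lam * |z e|)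
        < ∑ e, d e * (xstar e ^ 2 + lam * |xstar e|) := by
      obtain ⟨e₀, he₀⟩ := hTne
      exact Finset.sum_lt_sum (fun e _ => hle e)
        ⟨e₀, Finset.mem_univ e₀, hle' e₀ he₀⟩
    linarith
  have := hopt z hzfeas
  linarith
end
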